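/- For two densities ρ, σ ∈ L¹(]a,b[), the derivatives of the non-local terms satisfy |∂_x(𝒥ρ)(x) − ∂_x(𝒥σ)(x)| ≤ ℒ ∫_a^b |ρ(y) − σ(y)| dy for all x ∈ [a,b], with ℒ = ‖ω′‖_{L∞}/K_ω + ‖ω‖_{L∞}‖ω′‖_{L¹}/K_ω². -/

import Mathlib

open MeasureTheory Real intervalIntegral

lemma key_deriv (a b Mω' : ℝ) (ω : ℝ → ℝ) (hω : ContDiff ℝ 1 ω)
    (hω'bd : ∀ y, |deriv ω y| ≤ Mω')
    (u : ℝ → ℝ) (hu : IntervalIntegrable u volume a b) (x₀ : ℝ) :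
    HasDerivAt (fun x => ∫ y in a..b, u y * ω (y - x))
      (∫ y in a..b, u y * -deriv ω (y - x₀)) x₀ := by
  have hωc : Continuous ω := hω.continuous
  have hω'c : Continuous (deriv ω) := hω.continuous_deriv le_rfl
  have hmeas : AEStronglyMeasurable u (volume.restrict (Set.uIoc a b)) :=
    (intervalIntegrable_iff.mp hu).aestronglyMeasurable
  have key := intervalIntegral.hasDerivAt_integral_of_dominated_loc_of_deriv_le
    (F := fun x t => u t * ω (t - x)) (F' := fun x t => u t * -deriv ω (t - x))
    (bound := fun t => |u t| * Mω') (x₀ := x₀) (μ := volume) (a := a) (b := b)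
    Filter.univ_mem
    (Filter.Eventually.of_forall fun x =>
      hmeas.mul ((hωc.comp (continuous_id.sub continuous_const)).aestronglyMeasurable))
    (hu.mul_continuousOn ((hωc.comp (continuous_id.sub continuous_const)).continuousOn))
    (hmeas.mul (((hω'c.comp (continuous_id.sub continuous_const)).neg).aestronglyMeasurable))
    (Filter.Eventually.of_forall fun t _ x _ => by
      simp only [norm_mul, norm_neg, Real.norm_eq_abs]
      exact mul_le_mul_of_nonneg_left (hω'bd _) (abs_nonneg _))
    (hu.abs.mul_const Mω')
    (Filter.Eventually.of_forall fun t _ x _ => by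
      have hd : HasDerivAt (fun x => ω (t - x)) (deriv ω (t - x) * (-1)) x :=
        (hω.differentiable one_ne_zero (t - x)).hasDerivAt.comp x
          ((hasDerivAt_id x).const_sub t)
      have := hd.const_mul (u t)
      simpa [mul_comm, mul_neg] using this)
  exact key.2

theorem stmt4
    (a b Kω Mω Mω' : ℝ) (hab : a < b) (hKω : 0 < Kω)
    (ω : ℝ → ℝ) (hω : ContDiff ℝ 1 ω)
    (hωint : Integrable ω) (hω'int : Integrable (deriv ω))
    (hωbd : ∀ y, |ω y| ≤ Mω)
    (hω'bd : ∀ y, |deriv ω y| ≤ Mω')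
    (W : ℝ → ℝ) (hW : ∀ x, W x = ∫ y in a..b, ω (y - x))
    (hWlb : ∀ x ∈ Set.Icc a b, Kω ≤ W x)
    (ρ σ : ℝ → ℝ)
    (hρ : IntervalIntegrable ρ volume a b) (hσ : IntervalIntegrable σ volume a b)
    (J : (ℝ → ℝ) → ℝ → ℝ)
    (hJ : ∀ u x, J u x = (∫ y in a..b, u y * ω (y - x)) / W x) :
    ∀ x ∈ Set.Icc a b,
      |deriv (J ρ) x - deriv (J σ) x| ≤
        (Mω' / Kω + Mω * (∫ y, |deriv ω y|) / Kω ^ 2) *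
          ∫ y in a..b, |ρ y - σ y| := by
  intro x₀ hx₀
  have hωc : Continuous ω := hω.continuous
  have hω'c : Continuous (deriv ω) := hω.continuous_deriv le_rfl
  have hW₀ : Kω ≤ W x₀ := hWlb x₀ hx₀
  have hWpos : 0 < W x₀ := lt_of_lt_of_le hKω hW₀
  have hWne : W x₀ ≠ 0 := ne_of_gt hWpos
  -- notation
  set N : (ℝ → ℝ) → ℝ → ℝ := fun u x => ∫ y in a..b, u y * ω (y - x) with hN
  set D : (ℝ → ℝ) → ℝ → ℝ := fun u x => ∫ y in a..b, u y * -deriv ω (y - x) with hD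
  -- derivative of W
  have hWeq : W = fun x => ∫ y in a..b, (fun _ : ℝ => (1:ℝ)) y * ω (y - x) := by
    funext x; rw [hW]; simp
  have hWd : HasDerivAt W (D (fun _ => 1) x₀) x₀ := by
    rw [hWeq]
    exact key_deriv a b Mω' ω hω hω'bd _
      (intervalIntegrable_const) x₀
  -- derivative of J u for integrable u
  have hJd : ∀ u : ℝ → ℝ, IntervalIntegrable u volume a b →
      deriv (J u) x₀ = (D u x₀ * W x₀ - N u x₀ * D (fun _ => 1) x₀) / (W x₀)^2 := by
    intro u hu
    have hNu : HasDerivAt (fun x => N u x) (D u x₀) x₀ := key_deriv a b Mω' ω hω hω'bd u hu x₀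
    have : HasDerivAt (J u) ((D u x₀ * W x₀ - N u x₀ * D (fun _ => 1) x₀) / (W x₀)^2) x₀ := by
      have hfun : J u = fun x => N u x / W x := by funext x; rw [hJ]
      rw [hfun]
      simpa [sq, Pi.div_def] using hNu.div hWd hWne
    exact this.deriv
  -- integrability facts
  have hδ : IntervalIntegrable (fun y => ρ y - σ y) volume a b := hρ.sub hσ
  have hcont1 : ContinuousOn (fun y => ω (y - x₀)) (Set.uIcc a b) :=
    (hωc.comp (continuous_id.sub continuous_const)).continuousOn
  have hcont2 : ContinuousOn (fun y => -deriv ω (y - x₀)) (Set.uIcc a b) :=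
    ((hω'c.comp (continuous_id.sub continuous_const)).neg).continuousOn
  have hNρ := hρ.mul_continuousOn hcont1
  have hNσ := hσ.mul_continuousOn hcont1
  have hDρ := hρ.mul_continuousOn hcont2
  have hDσ := hσ.mul_continuousOn hcont2
  have hNδ := hδ.mul_continuousOn hcont1
  have hDδ := hδ.mul_continuousOn hcont2
  -- linearity
  have hNsub : N ρ x₀ - N σ x₀ = N (fun y => ρ y - σ y) x₀ := by
    rw [hN]; simp only
    rw [← intervalIntegral.integral_sub hNρ hNσ]
    congr 1; funext y; ring
  have hDsub : D ρ x₀ - D σ x₀ = D (fun y => ρ y - σ y) x₀ := by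
    rw [hD]; simp only
    rw [← intervalIntegral.integral_sub hDρ hDσ]
    congr 1; funext y; ring
  -- bounds
  set I : ℝ := ∫ y in a..b, |ρ y - σ y| with hI
  have hIint : IntervalIntegrable (fun y => |ρ y - σ y|) volume a b := hδ.abs
  have hInn : 0 ≤ I := intervalIntegral.integral_nonneg hab.le fun y _ => abs_nonneg _
  set L : ℝ := ∫ y, |deriv ω y| with hL
  have hLnn : 0 ≤ L := integral_nonneg fun y => abs_nonneg _
  have hMω'nn : 0 ≤ Mω' := le_trans (abs_nonneg _) (hω'bd 0)
  have hMωnn : 0 ≤ Mω := le_trans (abs_nonneg _) (hωbd 0)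
  have hboundD : |D (fun y => ρ y - σ y) x₀| ≤ Mω' * I := by
    calc |D (fun y => ρ y - σ y) x₀| ≤ ∫ y in a..b, |(ρ y - σ y) * -deriv ω (y - x₀)| :=
          intervalIntegral.abs_integral_le_integral_abs hab.le
      _ ≤ ∫ y in a..b, Mω' * |ρ y - σ y| := by
          apply intervalIntegral.integral_mono_on hab.le hDδ.abs (hIint.const_mul Mω')
          intro y _
          rw [abs_mul, abs_neg, mul_comm]
          exact mul_le_mul_of_nonneg_right (hω'bd _) (abs_nonneg _)
      _ = Mω' * I := by rw [hI, intervalIntegral.integral_const_mul]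
  have hboundN : |N (fun y => ρ y - σ y) x₀| ≤ Mω * I := by
    calc |N (fun y => ρ y - σ y) x₀| ≤ ∫ y in a..b, |(ρ y - σ y) * ω (y - x₀)| :=
          intervalIntegral.abs_integral_le_integral_abs hab.le
      _ ≤ ∫ y in a..b, Mω * |ρ y - σ y| := by
          apply intervalIntegral.integral_mono_on hab.le hNδ.abs (hIint.const_mul Mω)
          intro y _
          rw [abs_mul, mul_comm]
          exact mul_le_mul_of_nonneg_right (hωbd _) (abs_nonneg _)
      _ = Mω * I := by rw [hI, intervalIntegral.integral_const_mul]
  have hω'x : Integrable (fun y => |deriv ω (y - x₀)|) :=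
    (hω'int.comp_sub_right x₀).abs
  have hboundW' : |D (fun _ => (1:ℝ)) x₀| ≤ L := by
    have h1 : |D (fun _ => (1:ℝ)) x₀| ≤ ∫ y in a..b, |deriv ω (y - x₀)| := by
      calc |D (fun _ => (1:ℝ)) x₀| ≤ ∫ y in a..b, |(1:ℝ) * -deriv ω (y - x₀)| :=
            intervalIntegral.abs_integral_le_integral_abs hab.le
        _ = ∫ y in a..b, |deriv ω (y - x₀)| := by
            congr 1; funext y; rw [one_mul, abs_neg]
    refine h1.trans ?_
    rw [intervalIntegral.integral_of_le hab.le]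
    calc ∫ y in Set.Ioc a b, |deriv ω (y - x₀)| ≤ ∫ y, |deriv ω (y - x₀)| :=
          setIntegral_le_integral hω'x (Filter.Eventually.of_forall fun y => abs_nonneg _)
      _ = L := by rw [hL]; exact integral_sub_right_eq_self (fun y => |deriv ω y|) x₀
  -- put it together
  rw [hJd ρ hρ, hJd σ hσ]
  have hWsq : (0:ℝ) < (W x₀)^2 := by positivity
  have heq : (D ρ x₀ * W x₀ - N ρ x₀ * D (fun _ => 1) x₀) / (W x₀)^2
      - (D σ x₀ * W x₀ - N σ x₀ * D (fun _ => 1) x₀) / (W x₀)^2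
      = D (fun y => ρ y - σ y) x₀ / W x₀
        - N (fun y => ρ y - σ y) x₀ * D (fun _ => 1) x₀ / (W x₀)^2 := by
    rw [← hDsub, ← hNsub]
    field_simp
    ring
  rw [heq]
  have h1 : |D (fun y => ρ y - σ y) x₀ / W x₀| ≤ Mω' * I / Kω := by
    rw [abs_div, abs_of_pos hWpos]
    exact div_le_div₀ (by positivity) hboundD hKω hW₀
  have h2 : |N (fun y => ρ y - σ y) x₀ * D (fun _ => 1) x₀ / (W x₀)^2|
      ≤ Mω * I * L / Kω^2 := by
    rw [abs_div, abs_of_pos hWsq, abs_mul]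
    apply div_le_div₀ (by positivity)
      (mul_le_mul hboundN hboundW' (abs_nonneg _) (by positivity)) (by positivity)
    exact pow_le_pow_left₀ hKω.le hW₀ 2
  calc |D (fun y => ρ y - σ y) x₀ / W x₀
        - N (fun y => ρ y - σ y) x₀ * D (fun _ => 1) x₀ / (W x₀)^2|
      ≤ |D (fun y => ρ y - σ y) x₀ / W x₀|
        + |N (fun y => ρ y - σ y) x₀ * D (fun _ => 1) x₀ / (W x₀)^2| := abs_sub _ _
    _ ≤ Mω' * I / Kω + Mω * I * L / Kω^2 := add_le_add h1 h2
    _ = (Mω' / Kω + Mω * L / Kω ^ 2) * I := by ring
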